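/- Product formula (Gram determinant form): let E be a finite-dimensional complex inner product space, v₁,…,v_{p-1} linearly independent, and w₁, w₂ ∈ E with w₁, w₂ ∉ span(v₁,…,v_{p-1}). Writing V for the tuple (v₁,…,v_{p-1}), let A = det Gram(V, w₁), B = det Gram(V, w₂), C = det of the Gram pairing matrix of (V,w₁) against (V,w₂) (i.e. the matrix with entries ⟨xᵢ, yⱼ⟩ where x runs over (v₁,…,v_{p-1},w₁) and y over (v₁,…,v_{p-1},w₂)). Then A·B − |C|² = det Gram(V) · det Gram(V, w₁, w₂). -/

import Mathlib

open scoped InnerProductSpace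

/-- Gram pairing determinant of two tuples of vectors. -/
noncomputable def gramPairing {E : Type*} [NormedAddCommGroup E]
    [InnerProductSpace ℂ E] {m : Type*} [Fintype m] [DecidableEq m]
    (a b : m → E) : ℂ :=
  Matrix.det (Matrix.of fun i j => ⟪a i, b j⟫_ℂ)

namespace GramAux

variable {E : Type*} [NormedAddCommGroup E] [InnerProductSpace ℂ E]
variable {m : Type*} [Fintype m] [DecidableEq m]

/-- The linear map `x ↦ (i ↦ ⟪a i, x⟫)`. -/
noncomputable def innerPi (a : m → E) : E →ₗ[ℂ] (m → ℂ) where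
  toFun x := fun i => ⟪a i, x⟫_ℂ
  map_add' x y := by ext i; simp [inner_add_right]
  map_smul' c x := by ext i; simp [inner_smul_right]

/-- `gramPairing a` as an alternating map in the second tuple. -/
noncomputable def gramAlt (a : m → E) : E [⋀^m]→ₗ[ℂ] ℂ :=
  (Matrix.detRowAlternating).compLinearMap (innerPi a)

lemma gramAlt_apply (a b : m → E) : gramAlt a b = gramPairing a b := by
  have h : gramPairing a b = Matrix.det (Matrix.of fun j i => ⟪a i, b j⟫_ℂ) := by
    rw [gramPairing, ← Matrix.det_transpose]
    rfl
  rw [h]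
  rfl

lemma gramPairing_conj (a b : m → E) :
    gramPairing b a = starRingEnd ℂ (gramPairing a b) := by
  rw [gramPairing, gramPairing]
  rw [show (starRingEnd ℂ) (Matrix.det (Matrix.of fun i j => ⟪a i, b j⟫_ℂ)) =
      star (Matrix.det (Matrix.of fun i j => ⟪a i, b j⟫_ℂ)) from rfl,
    ← Matrix.det_conjTranspose]
  congr 1
  ext i j
  simp [Matrix.conjTranspose_apply, inner_conj_symm]

lemma gramPairing_dep (a b : m → E) (h : ¬ LinearIndependent ℂ b) :
    gramPairing a b = 0 := by
  rw [← gramAlt_apply]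
  exact (gramAlt a).map_linearDependent b h

/-- Column operation: adding an element of the span of `v` to one of the extra
columns does not change the Gram pairing determinant. -/
lemma column_add_span {k : Type*} [Fintype k] [DecidableEq k]
    (a : (m ⊕ k) → E) (v : m → E) (b : k → E) (j : k) (x p : E)
    (hp : p ∈ Submodule.span ℂ (Set.range v)) :
    gramPairing a (Sum.elim v (Function.update b j (x + p))) =
      gramPairing a (Sum.elim v (Function.update b j x)) := by
  rw [← gramAlt_apply, ← gramAlt_apply, ← Sum.update_elim_inr, ← Sum.update_elim_inr,
    (gramAlt a).map_update_add]
  have hz : gramAlt a (Function.update (Sum.elim v b) (Sum.inr j) p) = 0 := by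
    apply (gramAlt a).map_linearDependent
    intro hli
    have hmem : (Function.update (Sum.elim v b) (Sum.inr j) p) (Sum.inr j) ∈
        Submodule.span ℂ ((Function.update (Sum.elim v b) (Sum.inr j) p) ''
          (Set.range Sum.inl)) := by
      have hcomp : (Function.update (Sum.elim v b) (Sum.inr j) p) ∘ Sum.inl = v := by
        funext i; rw [Function.comp_apply, Function.update_of_ne Sum.inl_ne_inr]; rfl
      rw [← Set.range_comp, hcomp, Function.update_self]
      exact hp
    exact LinearIndependent.notMem_span_image hli (by simp) hmem
  rw [hz, add_zero]

/-- Block structure: if the extra vectors are orthogonal to the `v`'s,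
the Gram pairing determinant factors. -/
lemma gram_block {k : Type*} [Fintype k] [DecidableEq k] (v : m → E)
    (u u' : k → E) (h1 : ∀ i j, ⟪v i, u' j⟫_ℂ = 0) (h2 : ∀ i j, ⟪u i, v j⟫_ℂ = 0) :
    gramPairing (Sum.elim v u) (Sum.elim v u') = gramPairing v v * gramPairing u u' := by
  rw [gramPairing, gramPairing, gramPairing]
  have hM : (Matrix.of fun i j => ⟪Sum.elim v u i, Sum.elim v u' j⟫_ℂ) =
      Matrix.fromBlocks (Matrix.of fun i j => ⟪v i, v j⟫_ℂ) 0 0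
        (Matrix.of fun i j => ⟪u i, u' j⟫_ℂ) := by
    ext i j
    cases i <;> cases j <;> simp [Matrix.fromBlocks, h1, h2]
  rw [hM, Matrix.det_fromBlocks_zero₂₁]

end GramAux

/-- Product formula in Gram determinant form: with `A = det Gram(V, w₁)`,
`B = det Gram(V, w₂)` and `C` the Gram pairing of `(V, w₁)` against `(V, w₂)`,
one has `A·B − |C|² = det Gram(V) · det Gram(V, w₁, w₂)`. -/
theorem product_formula {E : Type*} [NormedAddCommGroup E]
    [InnerProductSpace ℂ E] [FiniteDimensional ℂ E] {m : ℕ}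
    (v : Fin m → E) (hv : LinearIndependent ℂ v) (w₁ w₂ : E)
    (hw₁ : w₁ ∉ Submodule.span ℂ (Set.range v))
    (hw₂ : w₂ ∉ Submodule.span ℂ (Set.range v)) :
    gramPairing (Sum.elim v ![w₁]) (Sum.elim v ![w₁]) *
        gramPairing (Sum.elim v ![w₂]) (Sum.elim v ![w₂]) -
      gramPairing (Sum.elim v ![w₁]) (Sum.elim v ![w₂]) *
        starRingEnd ℂ (gramPairing (Sum.elim v ![w₁]) (Sum.elim v ![w₂])) =
      gramPairing v v * gramPairing (Sum.elim v ![w₁, w₂]) (Sum.elim v ![w₁, w₂]) := by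
  classical
  set K : Submodule ℂ E := Submodule.span ℂ (Set.range v) with hK
  set u₁ : E := w₁ - (K.orthogonalProjectionOnto w₁ : E) with hu₁
  set u₂ : E := w₂ - (K.orthogonalProjectionOnto w₂ : E) with hu₂
  have hu₁K : u₁ ∈ Kᗮ := Submodule.sub_starProjection_mem_orthogonal w₁
  have hu₂K : u₂ ∈ Kᗮ := Submodule.sub_starProjection_mem_orthogonal w₂
  have hp₁ : (K.orthogonalProjectionOnto w₁ : E) ∈ K := (K.orthogonalProjectionOnto w₁).2
  have hp₂ : (K.orthogonalProjectionOnto w₂ : E) ∈ K := (K.orthogonalProjectionOnto w₂).2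
  have hw₁' : w₁ = u₁ + (K.orthogonalProjectionOnto w₁ : E) := by rw [hu₁]; abel
  have hw₂' : w₂ = u₂ + (K.orthogonalProjectionOnto w₂ : E) := by rw [hu₂]; abel
  have hvK : ∀ i, v i ∈ K := fun i => Submodule.subset_span ⟨i, rfl⟩
  -- orthogonality facts
  have hvu : ∀ (i : Fin m) (u : E), u ∈ Kᗮ → ⟪v i, u⟫_ℂ = 0 := fun i u hu =>
    hu (v i) (hvK i)
  have huv : ∀ (i : Fin m) (u : E), u ∈ Kᗮ → ⟪u, v i⟫_ℂ = 0 := fun i u hu => by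
    rw [← inner_conj_symm, hvu i u hu, map_zero]
  -- column reduction for a single extra column
  have col1 : ∀ (a : (Fin m ⊕ Fin 1) → E) (w u : E),
      w = u + (K.orthogonalProjectionOnto w : E) →
      gramPairing a (Sum.elim v ![w]) = gramPairing a (Sum.elim v ![u]) := by
    intro a w u hw
    have e1 : (![w] : Fin 1 → E) = Function.update ![u] 0 (u + (K.orthogonalProjectionOnto w : E)) := by
      ext i
      fin_cases i
      simp [← hw, -Submodule.coe_orthogonalProjectionOnto_apply]
    have e2 : (![u] : Fin 1 → E) = Function.update ![u] 0 u := by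
      ext i; fin_cases i; simp
    rw [e1, GramAux.column_add_span a v ![u] 0 u _ (K.orthogonalProjectionOnto w).2, ← e2]
  -- row reduction via conjugation
  have row1 : ∀ (b : (Fin m ⊕ Fin 1) → E) (w u : E),
      w = u + (K.orthogonalProjectionOnto w : E) →
      gramPairing (Sum.elim v ![w]) b = gramPairing (Sum.elim v ![u]) b := by
    intro b w u hw
    rw [GramAux.gramPairing_conj b (Sum.elim v ![w]),
      GramAux.gramPairing_conj b (Sum.elim v ![u]), col1 b w u hw]
  -- reductions for the pair case
  have col2 : gramPairing (Sum.elim v ![w₁, w₂]) (Sum.elim v ![w₁, w₂]) =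
      gramPairing (Sum.elim v ![w₁, w₂]) (Sum.elim v ![u₁, u₂]) := by
    have e1 : (![w₁, w₂] : Fin 2 → E) =
        Function.update ![u₁, w₂] 0 (u₁ + (K.orthogonalProjectionOnto w₁ : E)) := by
      ext i; fin_cases i <;> simp [← hw₁', -Submodule.coe_orthogonalProjectionOnto_apply]
    have e2 : (![u₁, w₂] : Fin 2 → E) = Function.update ![u₁, w₂] 0 u₁ := by
      ext i; fin_cases i <;> simp
    have e3 : (![u₁, w₂] : Fin 2 → E) =
        Function.update ![u₁, u₂] 1 (u₂ + (K.orthogonalProjectionOnto w₂ : E)) := by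
      ext i; fin_cases i <;> simp [← hw₂', -Submodule.coe_orthogonalProjectionOnto_apply]
    have e4 : (![u₁, u₂] : Fin 2 → E) = Function.update ![u₁, u₂] 1 u₂ := by
      ext i; fin_cases i <;> simp
    calc gramPairing (Sum.elim v ![w₁, w₂]) (Sum.elim v ![w₁, w₂])
        = gramPairing (Sum.elim v ![w₁, w₂]) (Sum.elim v ![u₁, w₂]) := by
          rw [e1, GramAux.column_add_span _ v ![u₁, w₂] 0 u₁ _ hp₁, ← e2]
      _ = gramPairing (Sum.elim v ![w₁, w₂]) (Sum.elim v ![u₁, u₂]) := by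
          nth_rewrite 1 [e3]
          rw [GramAux.column_add_span _ v ![u₁, u₂] 1 u₂ _ hp₂, ← e4]
  have row2 : gramPairing (Sum.elim v ![w₁, w₂]) (Sum.elim v ![u₁, u₂]) =
      gramPairing (Sum.elim v ![u₁, u₂]) (Sum.elim v ![u₁, u₂]) := by
    rw [GramAux.gramPairing_conj (Sum.elim v ![u₁, u₂]) (Sum.elim v ![w₁, w₂]),
      GramAux.gramPairing_conj (Sum.elim v ![u₁, u₂]) (Sum.elim v ![u₁, u₂])]
    congr 1
    have e1 : (![w₁, w₂] : Fin 2 → E) =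
        Function.update ![u₁, w₂] 0 (u₁ + (K.orthogonalProjectionOnto w₁ : E)) := by
      ext i; fin_cases i <;> simp [← hw₁', -Submodule.coe_orthogonalProjectionOnto_apply]
    have e2 : (![u₁, w₂] : Fin 2 → E) = Function.update ![u₁, w₂] 0 u₁ := by
      ext i; fin_cases i <;> simp
    have e3 : (![u₁, w₂] : Fin 2 → E) =
        Function.update ![u₁, u₂] 1 (u₂ + (K.orthogonalProjectionOnto w₂ : E)) := by
      ext i; fin_cases i <;> simp [← hw₂', -Submodule.coe_orthogonalProjectionOnto_apply]
    have e4 : (![u₁, u₂] : Fin 2 → E) = Function.update ![u₁, u₂] 1 u₂ := by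
      ext i; fin_cases i <;> simp
    calc gramPairing (Sum.elim v ![u₁, u₂]) (Sum.elim v ![w₁, w₂])
        = gramPairing (Sum.elim v ![u₁, u₂]) (Sum.elim v ![u₁, w₂]) := by
          rw [e1, GramAux.column_add_span _ v ![u₁, w₂] 0 u₁ _ hp₁, ← e2]
      _ = gramPairing (Sum.elim v ![u₁, u₂]) (Sum.elim v ![u₁, u₂]) := by
          nth_rewrite 1 [e3]
          rw [GramAux.column_add_span _ v ![u₁, u₂] 1 u₂ _ hp₂, ← e4]
  -- reduce everything to the orthogonal vectors
  have r11 : gramPairing (Sum.elim v ![w₁]) (Sum.elim v ![w₁]) =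
      gramPairing (Sum.elim v ![u₁]) (Sum.elim v ![u₁]) := by
    rw [col1 _ w₁ u₁ hw₁', row1 _ w₁ u₁ hw₁']
  have r22 : gramPairing (Sum.elim v ![w₂]) (Sum.elim v ![w₂]) =
      gramPairing (Sum.elim v ![u₂]) (Sum.elim v ![u₂]) := by
    rw [col1 _ w₂ u₂ hw₂', row1 _ w₂ u₂ hw₂']
  have r12 : gramPairing (Sum.elim v ![w₁]) (Sum.elim v ![w₂]) =
      gramPairing (Sum.elim v ![u₁]) (Sum.elim v ![u₂]) := by
    rw [col1 _ w₂ u₂ hw₂', row1 _ w₁ u₁ hw₁']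
  rw [r11, r22, r12, col2, row2]
  -- block factorization
  have b11 := GramAux.gram_block v ![u₁] ![u₁]
    (fun i j => hvu i _ (by fin_cases j <;> simpa using hu₁K))
    (fun i j => by fin_cases i <;> exact huv j _ hu₁K)
  have b22 := GramAux.gram_block v ![u₂] ![u₂]
    (fun i j => hvu i _ (by fin_cases j <;> simpa using hu₂K))
    (fun i j => by fin_cases i <;> exact huv j _ hu₂K)
  have b12 := GramAux.gram_block v ![u₁] ![u₂]
    (fun i j => hvu i _ (by fin_cases j <;> simpa using hu₂K))
    (fun i j => by fin_cases i <;> exact huv j _ hu₁K)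
  have bpair := GramAux.gram_block v ![u₁, u₂] ![u₁, u₂]
    (fun i j => by fin_cases j
                   · exact hvu i _ hu₁K
                   · exact hvu i _ hu₂K)
    (fun i j => by fin_cases i
                   · exact huv j _ hu₁K
                   · exact huv j _ hu₂K)
  rw [b11, b22, b12, bpair]
  -- small determinants
  have g1 : ∀ x y : E, gramPairing ![x] ![y] = ⟪x, y⟫_ℂ := by
    intro x y
    simp [gramPairing, Matrix.det_fin_one]
  have g2 : gramPairing ![u₁, u₂] ![u₁, u₂] =
      ⟪u₁, u₁⟫_ℂ * ⟪u₂, u₂⟫_ℂ - ⟪u₁, u₂⟫_ℂ * ⟪u₂, u₁⟫_ℂ := by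
    simp [gramPairing, Matrix.det_fin_two]
  have hGconj : starRingEnd ℂ (gramPairing v v) = gramPairing v v :=
    (GramAux.gramPairing_conj v v).symm
  have hconj : starRingEnd ℂ (gramPairing v v * gramPairing ![u₁] ![u₂]) =
      gramPairing v v * gramPairing ![u₂] ![u₁] := by
    rw [map_mul, hGconj, ← GramAux.gramPairing_conj]
  rw [hconj, g1, g1, g1, g1, g2]
  ring
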